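/- Semi-discrete gradient-flow energy dissipation, generalized Keller-Segel case: let K ∈ ℝ^{I×I} be symmetric, suppose u_1,...,u_I : J → ℝ are differentiable on the open interval J, set v_i(t) = Σ_{j=1}^I K_{ij} u_j(t), and suppose u solves u_i'(t) + (1/Δx)(F_{i+1/2}(t) − F_{i−1/2}(t)) = 0 for i = 1,...,I, where F_{1/2} = F_{I+1/2} = 0 and, for 1 ≤ i ≤ I−1, F_{i+1/2}(t) = −(φ_{i+1/2}(t)/Δx)[(g(u_{i+1}(t)) − v_{i+1}(t)) − (g(u_i(t)) − v_i(t))] with nonnegative functions φ_{i+1/2}. Then for every t ∈ J, (d/dt)[ Δx Σ_{i=1}^I ( G(u_i(t)) − (1/2) u_i(t) v_i(t) ) ] = −Δx Σ_{i=1}^{I−1} φ_{i+1/2}(t) [ ((g(u_{i+1}(t)) − v_{i+1}(t)) − (g(u_i(t)) − v_i(t)))/Δx ]², which is ≤ 0. -/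

import Mathlib

/-- Telescoping / Abel summation over `range`. -/
lemma tele_helper (w F : ℕ → ℝ) (n : ℕ) :
    ∑ i ∈ Finset.range (n + 1), w (i + 1) * (F (i + 1) - F i)
      = w (n + 1) * F (n + 1) - w 1 * F 0
        + ∑ i ∈ Finset.range n, (w (i + 1) - w (i + 2)) * F (i + 1) := by
  induction n with
  | zero => simp; ring
  | succ n ih =>
    rw [Finset.sum_range_succ, ih, Finset.sum_range_succ]
    ring

/-- Abel summation over `Icc 1 I`. -/
lemma abel_sum_helper (w F : ℕ → ℝ) (I : ℕ) (hI : 1 ≤ I) :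
    ∑ i ∈ Finset.Icc 1 I, w i * (F i - F (i - 1))
      = w I * F I - w 1 * F 0
        + ∑ i ∈ Finset.Icc 1 (I - 1), (w i - w (i + 1)) * F i := by
  obtain ⟨n, rfl⟩ : ∃ n, I = n + 1 := ⟨I - 1, by omega⟩
  have hinc : n + 1 - 1 = n := by omega
  rw [hinc, ← Finset.Ico_add_one_right_eq_Icc, ← Finset.Ico_add_one_right_eq_Icc,
    Finset.sum_Ico_eq_sum_range, Finset.sum_Ico_eq_sum_range]
  have e1 : ∀ i ∈ Finset.range (n + 1 + 1 - 1), w (1 + i) * (F (1 + i) - F (1 + i - 1))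
      = w (i + 1) * (F (i + 1) - F i) := by
    intro i _
    rw [show 1 + i - 1 = i from by omega, show 1 + i = i + 1 from by omega]
  have e2 : ∀ i ∈ Finset.range (n + 1 - 1), (w (1 + i) - w (1 + i + 1)) * F (1 + i)
      = (w (i + 1) - w (i + 2)) * F (i + 1) := by
    intro i _
    rw [show 1 + i = i + 1 from by omega, show i + 1 + 1 = i + 2 from by omega]
  rw [Finset.sum_congr rfl e1, Finset.sum_congr rfl e2,
    show n + 1 + 1 - 1 = n + 1 from by omega, hinc]
  exact tele_helper w F n

/-- semi-discrete gradient-flow energy dissipation,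
generalized Keller-Segel case. -/
theorem semidiscrete_gradient_flow_energy_dissipation_GKS
    (I : ℕ) (hI : 1 ≤ I) (Δx : ℝ) (hΔx : Δx = 1 / (I : ℝ))
    (J : Set ℝ) (hJopen : IsOpen J) (hJconn : J.OrdConnected)
    (g G : ℝ → ℝ) (hG : ∀ x : ℝ, HasDerivAt G (g x) x)
    (K : ℕ → ℕ → ℝ) (hK : ∀ i j, K i j = K j i)
    (u : ℕ → ℝ → ℝ) (φ : ℕ → ℝ → ℝ)
    (v : ℕ → ℝ → ℝ)
    (hv : ∀ i, ∀ t : ℝ, v i t = ∑ j ∈ Finset.Icc 1 I, K i j * u j t)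
    (hφ : ∀ i, ∀ t ∈ J, 0 ≤ φ i t)
    (F : ℕ → ℝ → ℝ)
    (hF0 : ∀ t, F 0 t = 0) (hFI : ∀ t, F I t = 0)
    (hF : ∀ i ∈ Finset.Icc 1 (I - 1), ∀ t ∈ J,
      F i t = -(φ i t / Δx) * ((g (u (i + 1) t) - v (i + 1) t) - (g (u i t) - v i t)))
    (hode : ∀ i ∈ Finset.Icc 1 I, ∀ t ∈ J,
      HasDerivAt (u i) (-(1 / Δx) * (F i t - F (i - 1) t)) t) :
    ∀ t ∈ J,
      HasDerivAt
        (fun s => Δx * ∑ i ∈ Finset.Icc 1 I, (G (u i s) - (1 / 2) * u i s * v i s))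
        (-Δx * ∑ i ∈ Finset.Icc 1 (I - 1),
          φ i t * (((g (u (i + 1) t) - v (i + 1) t) - (g (u i t) - v i t)) / Δx) ^ 2) t
      ∧ -Δx * ∑ i ∈ Finset.Icc 1 (I - 1),
          φ i t * (((g (u (i + 1) t) - v (i + 1) t) - (g (u i t) - v i t)) / Δx) ^ 2 ≤ 0 := by
  intro t ht
  have hIpos : (0 : ℝ) < I := by exact_mod_cast hI
  have hΔxpos : 0 < Δx := by rw [hΔx]; positivity
  have hΔxne : Δx ≠ 0 := ne_of_gt hΔxpos
  obtain ⟨d, hd⟩ : ∃ d : ℕ → ℝ, ∀ i, d i = -(1 / Δx) * (F i t - F (i - 1) t) :=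
    ⟨_, fun _ => rfl⟩
  obtain ⟨w, hwdef⟩ : ∃ w : ℕ → ℝ, ∀ i, w i = g (u i t) - v i t := ⟨_, fun _ => rfl⟩
  set S := Finset.Icc 1 I with hS
  have hu' : ∀ i ∈ S, HasDerivAt (u i) (d i) t := by
    intro i hi; rw [hd]; exact hode i hi t ht
  have hv' : ∀ i, HasDerivAt (v i) (∑ j ∈ S, K i j * d j) t := by
    intro i
    have hfun : (fun s => v i s) = fun s => ∑ j ∈ S, K i j * u j s := by
      funext s; exact hv i s
    rw [show v i = fun s => v i s from rfl, hfun]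
    exact HasDerivAt.fun_sum fun j hj => (hu' j hj).const_mul (K i j)
  have hterm : ∀ i ∈ S, HasDerivAt (fun s => G (u i s) - 1 / 2 * u i s * v i s)
      (g (u i t) * d i - (1 / 2 * d i * v i t + 1 / 2 * u i t * ∑ j ∈ S, K i j * d j)) t := by
    intro i hi
    exact ((hG (u i t)).comp t (hu' i hi)).sub
      (((hu' i hi).const_mul (1 / 2)).mul (hv' i))
  have hsum : HasDerivAt
      (fun s => Δx * ∑ i ∈ S, (G (u i s) - 1 / 2 * u i s * v i s))
      (Δx * ∑ i ∈ S, (g (u i t) * d i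
        - (1 / 2 * d i * v i t + 1 / 2 * u i t * ∑ j ∈ S, K i j * d j))) t :=
    (HasDerivAt.fun_sum hterm).const_mul Δx
  -- symmetry of K
  have symm : ∑ i ∈ S, u i t * ∑ j ∈ S, K i j * d j = ∑ i ∈ S, d i * v i t := by
    simp_rw [hv, Finset.mul_sum]
    rw [Finset.sum_comm]
    refine Finset.sum_congr rfl fun i _ => Finset.sum_congr rfl fun j _ => ?_
    rw [hK j i]; ring
  have key : Δx * ∑ i ∈ S, (g (u i t) * d i
        - (1 / 2 * d i * v i t + 1 / 2 * u i t * ∑ j ∈ S, K i j * d j))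
      = -Δx * ∑ i ∈ Finset.Icc 1 (I - 1),
          φ i t * (((g (u (i + 1) t) - v (i + 1) t) - (g (u i t) - v i t)) / Δx) ^ 2 := by
    have step1 : ∑ i ∈ S, (g (u i t) * d i
          - (1 / 2 * d i * v i t + 1 / 2 * u i t * ∑ j ∈ S, K i j * d j))
        = ∑ i ∈ S, w i * d i := by
      have expand : ∀ i ∈ S, g (u i t) * d i
            - (1 / 2 * d i * v i t + 1 / 2 * u i t * ∑ j ∈ S, K i j * d j)
          = (g (u i t) * d i - 1 / 2 * (d i * v i t))
            - 1 / 2 * (u i t * ∑ j ∈ S, K i j * d j) := by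
        intro i _; ring
      rw [Finset.sum_congr rfl expand, Finset.sum_sub_distrib, ← Finset.mul_sum, symm,
        Finset.mul_sum, ← Finset.sum_sub_distrib]
      refine Finset.sum_congr rfl fun i _ => ?_
      rw [hwdef]; ring
    rw [step1]
    have step2 : Δx * ∑ i ∈ S, w i * d i
        = -∑ i ∈ Finset.Icc 1 I, w i * (F i t - F (i - 1) t) := by
      rw [Finset.mul_sum, ← hS, ← Finset.sum_neg_distrib]
      refine Finset.sum_congr rfl fun i _ => ?_
      rw [hd]; field_simp
    rw [step2, abel_sum_helper w (fun i => F i t) I hI, hF0, hFI]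
    have step3 : ∀ i ∈ Finset.Icc 1 (I - 1),
        (w i - w (i + 1)) * F i t
        = -(-Δx * (φ i t * (((g (u (i + 1) t) - v (i + 1) t) - (g (u i t) - v i t)) / Δx) ^ 2)) := by
      intro i hi
      rw [hF i hi t ht, hwdef, hwdef]
      field_simp
      ring
    rw [Finset.sum_congr rfl step3]
    simp only [mul_zero, sub_zero, zero_add, Finset.sum_neg_distrib, neg_neg]
    rw [← Finset.mul_sum]
  constructor
  · rw [← key]; exact hsum
  · have hsumnn : 0 ≤ ∑ i ∈ Finset.Icc 1 (I - 1),
        φ i t * (((g (u (i + 1) t) - v (i + 1) t) - (g (u i t) - v i t)) / Δx) ^ 2 :=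
      Finset.sum_nonneg fun i _ => mul_nonneg (hφ i t ht) (sq_nonneg _)
    have h2 : 0 ≤ Δx * ∑ i ∈ Finset.Icc 1 (I - 1),
        φ i t * (((g (u (i + 1) t) - v (i + 1) t) - (g (u i t) - v i t)) / Δx) ^ 2 :=
      mul_nonneg (le_of_lt hΔxpos) hsumnn
    linarith
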